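/- arXiv:1811.01613 — 3 statements merged into one kernel-verified Lean document; each statement's English description precedes it below -/
import Mathlib

section
/- Let α ∈ ℝ and let 0 < θ_min ≤ θ_max be fixed reals. Then there exists a constant C > 0 such that for all θ_1, θ_2 with θ_min ≤ θ_2 ≤ θ_1 ≤ θ_max and all reals S ≥ 0, | θ_1^α e^{−S/θ_1} − θ_2^α e^{−S/θ_2} | ≤ C (θ_1 − θ_2)(S + 1) e^{−S/θ_1}. -/
open Real

/-- For `α ∈ ℝ` and `0 < θ_min ≤ θ_max`, there is `C > 0` such that for all
`θ_min ≤ θ_2 ≤ θ_1 ≤ θ_max` and all `S ≥ 0`,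
`| θ_1^α e^{−S/θ_1} − θ_2^α e^{−S/θ_2} | ≤ C (θ_1 − θ_2)(S + 1) e^{−S/θ_1}`. -/
theorem stmt_9 (α θmin θmax : ℝ) (h0 : 0 < θmin) (h1 : θmin ≤ θmax) :
    ∃ C : ℝ, 0 < C ∧ ∀ θ1 θ2 : ℝ, θmin ≤ θ2 → θ2 ≤ θ1 → θ1 ≤ θmax → ∀ S : ℝ, 0 ≤ S →
      |θ1 ^ α * Real.exp (-S / θ1) - θ2 ^ α * Real.exp (-S / θ2)|
        ≤ C * (θ1 - θ2) * (S + 1) * Real.exp (-S / θ1) := by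
  have hbnd : ∀ β t : ℝ, θmin ≤ t → t ≤ θmax → t ^ β ≤ θmin ^ β + θmax ^ β := by
    intro β t ht1 ht2
    rcases le_total 0 β with hβ | hβ
    · have h2 := Real.rpow_le_rpow (by linarith) ht2 hβ
      have h3 : (0:ℝ) ≤ θmin ^ β := Real.rpow_nonneg h0.le β
      linarith
    · have h2 : t ^ β ≤ θmin ^ β := Real.rpow_le_rpow_of_nonpos h0 ht1 hβ
      have h3 : (0:ℝ) ≤ θmax ^ β := Real.rpow_nonneg (by linarith) β
      linarith
  set L : ℝ := |α| * (θmin ^ (α - 1) + θmax ^ (α - 1)) with hLdef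
  set K : ℝ := (θmin ^ α + θmax ^ α) / θmin ^ 2 with hKdef
  have hLnn : 0 ≤ L := by
    apply mul_nonneg (abs_nonneg α)
    have := Real.rpow_nonneg h0.le (α - 1)
    have := Real.rpow_nonneg (h0.trans_le h1).le (α - 1)
    linarith
  have hKnn : 0 ≤ K := by
    apply div_nonneg _ (by positivity)
    have := Real.rpow_nonneg h0.le α
    have := Real.rpow_nonneg (h0.trans_le h1).le α
    linarith
  refine ⟨L + K + 1, by linarith, ?_⟩
  intro θ1 θ2 h21 h22 h23 S hS
  have hθ2 : 0 < θ2 := lt_of_lt_of_le h0 h21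
  have hθ1 : 0 < θ1 := lt_of_lt_of_le hθ2 h22
  set E1 := Real.exp (-S / θ1) with hE1def
  set E2 := Real.exp (-S / θ2) with hE2def
  have hE1pos : 0 < E1 := Real.exp_pos _
  have hE2pos : 0 < E2 := Real.exp_pos _
  have hd : (0:ℝ) ≤ θ1 - θ2 := sub_nonneg.2 h22
  -- Lipschitz bound for rpow on [θmin, θmax]
  have hlip : |θ1 ^ α - θ2 ^ α| ≤ L * (θ1 - θ2) := by
    have key := Convex.norm_image_sub_le_of_norm_hasDerivWithin_le
      (f := fun t : ℝ => t ^ α) (f' := fun t : ℝ => α * t ^ (α - 1)) (C := L)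
      (s := Set.Icc θmin θmax)
      (fun t ht => (Real.hasDerivAt_rpow_const
        (Or.inl (ne_of_gt (lt_of_lt_of_le h0 ht.1)))).hasDerivWithinAt)
      (fun t ht => by
        rw [Real.norm_eq_abs, abs_mul,
          abs_of_nonneg (Real.rpow_nonneg (lt_of_lt_of_le h0 ht.1).le _)]
        exact mul_le_mul_of_nonneg_left (hbnd (α - 1) t ht.1 ht.2) (abs_nonneg α))
      (convex_Icc _ _) ⟨h21, h22.trans h23⟩ ⟨h21.trans h22, h23⟩
    simpa [Real.norm_eq_abs, abs_of_nonneg hd] using key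
  -- exp difference bound
  have hEle : E2 ≤ E1 := by
    apply Real.exp_le_exp.2
    rw [div_le_div_iff₀ hθ2 hθ1]
    nlinarith
  have hx : S / θ2 - S / θ1 ≤ S * (θ1 - θ2) / θmin ^ 2 := by
    have h5 : S / θ2 - S / θ1 = S * (θ1 - θ2) / (θ1 * θ2) := by
      field_simp
    rw [h5]
    apply div_le_div_of_nonneg_left (by positivity) (by positivity)
    nlinarith
  have hexp : E1 - E2 ≤ E1 * (S * (θ1 - θ2) / θmin ^ 2) := by
    have hx0 : 0 ≤ S / θ2 - S / θ1 :=
      sub_nonneg.2 (div_le_div_of_nonneg_left hS hθ2 h22)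
    have h6 : E2 = E1 * Real.exp (-(S / θ2 - S / θ1)) := by
      rw [hE1def, hE2def, ← Real.exp_add]
      ring_nf
    have h7 : 1 - (S / θ2 - S / θ1) ≤ Real.exp (-(S / θ2 - S / θ1)) := by
      have := Real.add_one_le_exp (-(S / θ2 - S / θ1))
      linarith
    have h8 : E1 - E2 ≤ E1 * (S / θ2 - S / θ1) := by
      rw [h6]
      nlinarith
    have h9 : E1 * (S / θ2 - S / θ1) ≤ E1 * (S * (θ1 - θ2) / θmin ^ 2) :=
      mul_le_mul_of_nonneg_left hx hE1pos.le
    linarith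
  -- bound θ2 ^ α
  have hθ2α : θ2 ^ α ≤ K * θmin ^ 2 := by
    have := hbnd α θ2 h21 (h22.trans h23)
    rw [hKdef, div_mul_cancel₀]
    · exact this
    · positivity
  have hθ2αnn : (0:ℝ) ≤ θ2 ^ α := Real.rpow_nonneg hθ2.le α
  -- triangle inequality split
  have hsplit : |θ1 ^ α * E1 - θ2 ^ α * E2|
      ≤ |θ1 ^ α - θ2 ^ α| * E1 + θ2 ^ α * (E1 - E2) := by
    have h10 : θ1 ^ α * E1 - θ2 ^ α * E2
        = (θ1 ^ α - θ2 ^ α) * E1 + θ2 ^ α * (E1 - E2) := by ring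
    rw [h10]
    calc |(θ1 ^ α - θ2 ^ α) * E1 + θ2 ^ α * (E1 - E2)|
        ≤ |(θ1 ^ α - θ2 ^ α) * E1| + |θ2 ^ α * (E1 - E2)| := abs_add_le _ _
      _ = |θ1 ^ α - θ2 ^ α| * E1 + θ2 ^ α * (E1 - E2) := by
          rw [abs_mul, abs_mul, abs_of_nonneg hE1pos.le,
            abs_of_nonneg hθ2αnn, abs_of_nonneg (sub_nonneg.2 hEle)]
  -- combine
  have hterm2 : θ2 ^ α * (E1 - E2) ≤ K * (S * (θ1 - θ2)) * E1 := by
    calc θ2 ^ α * (E1 - E2) ≤ (K * θmin ^ 2) * (E1 * (S * (θ1 - θ2) / θmin ^ 2)) := by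
          apply mul_le_mul hθ2α hexp (by linarith) (by positivity)
      _ = K * (S * (θ1 - θ2)) * E1 := by field_simp
  have hterm1 : |θ1 ^ α - θ2 ^ α| * E1 ≤ L * (θ1 - θ2) * E1 :=
    mul_le_mul_of_nonneg_right hlip hE1pos.le
  have hfin : L * (θ1 - θ2) * E1 + K * (S * (θ1 - θ2)) * E1
      ≤ (L + K + 1) * (θ1 - θ2) * (S + 1) * E1 := by
    nlinarith [mul_nonneg (mul_nonneg hLnn hd) (mul_nonneg hS hE1pos.le),
      mul_nonneg hKnn (mul_nonneg hd hE1pos.le),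
      mul_nonneg hd (mul_nonneg (by linarith : (0:ℝ) ≤ S + 1) hE1pos.le)]
  calc |θ1 ^ α * E1 - θ2 ^ α * E2|
      ≤ |θ1 ^ α - θ2 ^ α| * E1 + θ2 ^ α * (E1 - E2) := hsplit
    _ ≤ L * (θ1 - θ2) * E1 + K * (S * (θ1 - θ2)) * E1 := add_le_add hterm1 hterm2
    _ ≤ (L + K + 1) * (θ1 - θ2) * (S + 1) * E1 := hfin
end

section
/- Let B > 0 be a real number and let c ∈ ℂ with c ≠ 0. Then there exists a constant C > 0 such that for all s ≥ 1, all A ≥ 1, all φ ∈ ℝ, and all z ∈ ℂ with |z| ≤ B, ∫_{−A/s}^{0} |log| c e^{u s + i φ} + z || du ≤ C e^{A} / s. -/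
open MeasureTheory Real

/-- auxiliary: positive part of `-log |r|`. -/
noncomputable def g0 : ℝ → ℝ := fun r => max 0 (-Real.log |r|)

lemma g0_nonneg (r : ℝ) : 0 ≤ g0 r := le_max_left _ _

lemma g0_meas : Measurable g0 :=
  measurable_const.max (Real.measurable_log.comp measurable_abs).neg

lemma integrableOn_neg_log : IntegrableOn (fun x : ℝ => -Real.log x) (Set.Ioc 0 1) := by
  apply intervalIntegral.integrableOn_deriv_of_nonneg (g := fun x : ℝ => x - x * Real.log x)
  · exact (continuous_id.sub Real.continuous_mul_log).continuousOn
  · intro x hx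
    have h : HasDerivAt (fun x : ℝ => x - x * Real.log x) (1 - (Real.log x + 1)) x :=
      ((hasDerivAt_id x).sub (Real.hasDerivAt_mul_log (ne_of_gt hx.1)))
    convert h using 1
    ring
  · intro x hx
    have : Real.log x ≤ 0 := Real.log_nonpos (le_of_lt hx.1) (le_of_lt hx.2)
    linarith

lemma integrableOn_g0_Ioc : IntegrableOn g0 (Set.Ioc (0:ℝ) 1) := by
  apply integrableOn_neg_log.congr_fun _ measurableSet_Ioc
  intro x hx
  have hx0 : (0:ℝ) < x := hx.1
  have hlog : Real.log x ≤ 0 := Real.log_nonpos (le_of_lt hx0) hx.2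
  simp only [g0, abs_of_pos hx0]
  rw [max_eq_right (by linarith)]

lemma integrable_g0 : Integrable g0 := by
  have hneg : IntegrableOn g0 (Set.Ico (-1:ℝ) 0) := by
    have hmp : MeasurePreserving (Neg.neg : ℝ → ℝ) volume volume :=
      Measure.measurePreserving_neg _
    have hemb : MeasurableEmbedding (Neg.neg : ℝ → ℝ) :=
      (Homeomorph.neg ℝ).measurableEmbedding
    have := (hmp.integrableOn_comp_preimage hemb
      (f := g0) (s := Set.Ioc (0:ℝ) 1)).2 integrableOn_g0_Ioc
    have heq : g0 ∘ (Neg.neg : ℝ → ℝ) = g0 := by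
      funext r; simp [g0, Function.comp, abs_neg]
    have hpre : (Neg.neg : ℝ → ℝ) ⁻¹' Set.Ioc (0:ℝ) 1 = Set.Ico (-1:ℝ) 0 := by
      ext x
      simp only [Set.mem_preimage, Set.mem_Ioc, Set.mem_Ico]
      constructor <;> intro h <;> constructor <;> linarith [h.1, h.2]
    rwa [heq, hpre] at this
  have hunion : IntegrableOn g0 (Set.Ico (-1:ℝ) 0 ∪ Set.Ioc (0:ℝ) 1) :=
    hneg.union integrableOn_g0_Ioc
  apply (integrableOn_iff_integrable_of_support_subset _).1 hunion
  intro x hx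
  simp only [Function.mem_support, g0] at hx
  have hlog : 0 < -Real.log |x| := by
    rcases lt_or_ge 0 (-Real.log |x|) with h | h
    · exact h
    · exact absurd (max_eq_left h) hx
  have hx0 : x ≠ 0 := by
    rintro rfl; simp at hlog
  have hxlt : |x| < 1 := by
    by_contra hge
    push_neg at hge
    have := Real.log_nonneg hge
    linarith
  rcases lt_or_ge x 0 with h | h
  · left; constructor
    · rw [abs_of_neg h] at hxlt; linarith
    · exact h
  · right
    have hx0' : 0 < x := lt_of_le_of_ne h (Ne.symm hx0)
    rw [abs_of_pos hx0'] at hxlt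
    exact ⟨hx0', le_of_lt hxlt⟩

/-- Let `B > 0` and `c ∈ ℂ` with `c ≠ 0`. Then there is `C > 0` such that
for all `s ≥ 1`, `A ≥ 1`, `φ ∈ ℝ` and `z ∈ ℂ` with `|z| ≤ B`,
`∫_{−A/s}^{0} |log| c e^{u s + i φ} + z || du ≤ C e^{A} / s`. -/
theorem stmt_10 (B : ℝ) (hB : 0 < B) (c : ℂ) (hc : c ≠ 0) :
    ∃ C : ℝ, 0 < C ∧ ∀ s : ℝ, 1 ≤ s → ∀ A : ℝ, 1 ≤ A → ∀ φ : ℝ, ∀ z : ℂ,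
      ‖z‖ ≤ B →
      (∫ u in Set.Icc (-A / s) (0 : ℝ),
        |Real.log ‖c * Complex.exp (((u * s : ℝ) : ℂ)
          + (φ : ℂ) * Complex.I) + z‖|)
      ≤ C * Real.exp A / s := by
  set a : ℝ := ‖c‖ with ha_def
  have ha : 0 < a := norm_pos_iff.mpr hc
  set J : ℝ := ∫ r, g0 r with hJ_def
  have hJ : 0 ≤ J := integral_nonneg g0_nonneg
  set K : ℝ := |Real.log (a + B)| with hK_def
  have hK : 0 ≤ K := abs_nonneg _
  refine ⟨K + J / a + 1, by positivity, ?_⟩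
  intro s hs A hA φ z hz
  have hs0 : (0:ℝ) < s := lt_of_lt_of_le one_pos hs
  have hA0 : (0:ℝ) < A := lt_of_lt_of_le one_pos hA
  set t : ℝ := ‖z‖ with ht_def
  have ht0 : 0 ≤ t := norm_nonneg z
  set ψ : ℝ → ℝ := fun u => a * Real.exp (u * s) with hψ_def
  set D : ℝ → ℝ := fun u => a * (Real.exp (u * s) * s) with hD_def
  set M : ℝ := Real.exp A / (s * a) with hM_def
  have hM0 : 0 ≤ M := by positivity
  set S : Set ℝ := Set.Icc (-A / s) (0:ℝ) with hS_def
  -- derivative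
  have hψ' : ∀ u ∈ S, HasDerivWithinAt ψ (D u) S u := by
    intro u hu
    exact (((hasDerivAt_mul_const s).exp).const_mul a).hasDerivWithinAt
  -- injectivity
  have hmono : StrictMono ψ := by
    intro x y hxy
    have : x * s < y * s := mul_lt_mul_of_pos_right hxy hs0
    exact mul_lt_mul_of_pos_left (Real.exp_lt_exp.2 this) ha
  have hinj : Set.InjOn ψ S := hmono.injective.injOn
  -- ψ u within bounds on S
  have hus : ∀ u ∈ S, -A ≤ u * s ∧ u * s ≤ 0 := by
    intro u hu
    constructor
    · have := mul_le_mul_of_nonneg_right hu.1 (le_of_lt hs0)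
      rwa [div_mul_cancel₀ (-A) (ne_of_gt hs0)] at this
    · exact mul_nonpos_of_nonpos_of_nonneg hu.2 (le_of_lt hs0)
  -- the dominating function
  set H : ℝ → ℝ := fun u => K + M * (|D u| * g0 (ψ u - t)) with hH_def
  -- integrability of the transported function
  have hgt_int : Integrable (fun r : ℝ => g0 (r - t)) := integrable_g0.comp_sub_right t
  have hDg_int : IntegrableOn (fun u => |D u| * g0 (ψ u - t)) S := by
    have := (integrableOn_image_iff_integrableOn_abs_deriv_smul measurableSet_Icc
      hψ' hinj (fun r => g0 (r - t))).1 (hgt_int.integrableOn)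
    simpa [smul_eq_mul] using this
  have hSfin : volume S ≠ ⊤ := by
    rw [hS_def, Real.volume_Icc]; exact ENNReal.ofReal_ne_top
  have hH_int : IntegrableOn H S := by
    apply Integrable.add
    · exact integrableOn_const hSfin
    · exact hDg_int.const_mul M
  -- pointwise a.e. bound
  have hbad : ∀ᵐ u : ℝ, ψ u ≠ t := by
    have hsub : {u : ℝ | ψ u = t}.Subsingleton := by
      intro x hx y hy
      exact hmono.injective (hx.trans hy.symm)
    have := hsub.measure_zero (volume : Measure ℝ)
    rw [ae_iff]
    simpa using this
  have hmono_int : (∫ u in S,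
      |Real.log ‖c * Complex.exp (((u * s : ℝ) : ℂ)
        + (φ : ℂ) * Complex.I) + z‖|) ≤ ∫ u in S, H u := by
    apply integral_mono_of_nonneg
    · exact Filter.Eventually.of_forall fun u => abs_nonneg _
    · exact hH_int
    · apply (ae_restrict_iff' (measurableSet_Icc : MeasurableSet S)).2
      filter_upwards [hbad] with u hne hu
      -- abbreviations
      set w : ℂ := c * Complex.exp (((u * s : ℝ) : ℂ) + (φ : ℂ) * Complex.I) + z with hw_def
      have habs_exp : ‖c * Complex.exp (((u * s : ℝ) : ℂ) + (φ : ℂ) * Complex.I)‖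
          = ψ u := by
        rw [norm_mul, Complex.norm_exp]
        simp [hψ_def, ha_def]
      have hy : 0 < |ψ u - t| := abs_pos.2 (sub_ne_zero.2 hne)
      have hlow : |ψ u - t| ≤ ‖w‖ := by
        have h1 := abs_norm_sub_norm_le
          (c * Complex.exp (((u * s : ℝ) : ℂ) + (φ : ℂ) * Complex.I)) (-z)
        simp only [norm_neg, sub_neg_eq_add] at h1
        rw [habs_exp] at h1
        exact h1
      have hw0 : 0 < ‖w‖ := lt_of_lt_of_le hy hlow
      have hup : ‖w‖ ≤ a + B := by
        calc ‖w‖ ≤ ‖c * Complex.exp (((u * s : ℝ) : ℂ)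
              + (φ : ℂ) * Complex.I)‖ + ‖z‖ := norm_add_le _ _
          _ ≤ a * 1 + B := by
              rw [habs_exp]
              have h2 : Real.exp (u * s) ≤ 1 := Real.exp_le_one_iff.2 (hus u hu).2
              have : ψ u ≤ a * 1 := by
                rw [hψ_def]; exact mul_le_mul_of_nonneg_left h2 (le_of_lt ha)
              exact add_le_add this hz
          _ = a + B := by ring
      -- key: 1 ≤ M * |D u|
      have hMD : 1 ≤ M * |D u| := by
        have hDpos : 0 < D u := by
          rw [hD_def]; positivity
        rw [abs_of_pos hDpos]
        have heq : M * D u = Real.exp (A + u * s) := by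
          rw [hM_def, hD_def, Real.exp_add]
          field_simp
        rw [heq]
        have : (0:ℝ) ≤ A + u * s := by linarith [(hus u hu).1]
        calc (1:ℝ) = Real.exp 0 := Real.exp_zero.symm
          _ ≤ Real.exp (A + u * s) := Real.exp_le_exp.2 this
      have hg_le : g0 (ψ u - t) ≤ M * (|D u| * g0 (ψ u - t)) := by
        rw [← mul_assoc]
        exact le_mul_of_one_le_left (g0_nonneg _) hMD
      rw [abs_le]
      constructor
      · -- lower bound: -(H u) ≤ log |w|
        have h3 : -Real.log ‖w‖ ≤ -Real.log |ψ u - t| :=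
          neg_le_neg (Real.log_le_log hy hlow)
        have h4 : -Real.log |ψ u - t| ≤ g0 (ψ u - t) := le_max_right _ _
        have : -Real.log ‖w‖ ≤ M * (|D u| * g0 (ψ u - t)) :=
          le_trans h3 (le_trans h4 hg_le)
        simp only [hH_def]
        linarith
      · -- upper bound: log |w| ≤ H u
        have h5 : Real.log ‖w‖ ≤ Real.log (a + B) :=
          Real.log_le_log hw0 hup
        have h6 : Real.log (a + B) ≤ K := le_abs_self _
        have h7 : 0 ≤ M * (|D u| * g0 (ψ u - t)) :=
          mul_nonneg hM0 (mul_nonneg (abs_nonneg _) (g0_nonneg _))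
        simp only [hH_def]
        linarith
  -- compute/estimate ∫ H
  have hvol : (volume S).toReal = A / s := by
    rw [hS_def, Real.volume_Icc, show (0:ℝ) - (-A/s) = A / s by ring,
      ENNReal.toReal_ofReal (by positivity)]
  have hkey : ∫ u in S, |D u| * g0 (ψ u - t) ≤ J := by
    have h1 : ∫ u in S, |D u| * g0 (ψ u - t) = ∫ r in ψ '' S, g0 (r - t) := by
      have := integral_image_eq_integral_abs_deriv_smul measurableSet_Icc hψ' hinj
        (fun r => g0 (r - t))
      simpa [smul_eq_mul] using this.symm
    rw [h1]
    calc ∫ r in ψ '' S, g0 (r - t) ≤ ∫ r, g0 (r - t) :=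
          setIntegral_le_integral hgt_int
            (Filter.Eventually.of_forall fun r => g0_nonneg _)
      _ = J := by rw [hJ_def]; exact integral_sub_right_eq_self g0 t
  have hHval : ∫ u in S, H u = K * (A / s) + M * ∫ u in S, |D u| * g0 (ψ u - t) := by
    rw [hH_def]
    rw [integral_add (integrableOn_const (C := K) hSfin)
      (hDg_int.const_mul M)]
    rw [setIntegral_const, integral_const_mul, measureReal_def, hvol, smul_eq_mul, mul_comm (A/s) K]
  have hfinal : ∫ u in S, H u ≤ (K + J / a + 1) * Real.exp A / s := by
    rw [hHval]
    have h1 : M * ∫ u in S, |D u| * g0 (ψ u - t) ≤ M * J := by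
      apply mul_le_mul_of_nonneg_left hkey hM0
    have h2 : M * J = (J / a) * Real.exp A / s := by
      rw [hM_def]; field_simp
    have hAe : A ≤ Real.exp A := le_trans (by linarith) (Real.add_one_le_exp A)
    have h3 : K * (A / s) ≤ K * Real.exp A / s := by
      rw [mul_div_assoc]
      gcongr
    have hE : 0 < Real.exp A / s := by positivity
    have hexp : (K + J / a + 1) * Real.exp A / s
        = K * Real.exp A / s + J / a * Real.exp A / s + Real.exp A / s := by ring
    rw [hexp]
    linarith [h2 ▸ h1]
  exact le_trans hmono_int hfinal
end

section
/- Let J ≥ 2 be an integer, let b_1, …, b_J ∈ ℂ be nonzero, let ξ_1, …, ξ_J > 0 be reals, and let m, n ∈ ℕ^J. Then there exists a constant C > 0 such that for all s > 0 and all A > 0 satisfying ∑_{j=2}^J |b_j/b_1| e^{−A} ≤ 1/2, one has | ∫_{ℝ^J} ∫_{R_{1,∅}(A,s)} log|1 + ∑_{j=2}^J (b_j/b_1) e^{(u_j − u_1 + i(v_j − v_1)) s}| · e^{−∑_{j=1}^J (u_j² + v_j²)/ξ_j} u^m v^n du dv | ≤ C e^{−A}, where R_{1,∅}(A,s) :=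 {u = (u_1,…,u_J) ∈ ℝ^J : u_j − u_1 ≤ −A/s for all j = 2,…,J}. -/
open MeasureTheory Real

set_option maxHeartbeats 1000000

private lemma aux_log_bound {x : ℝ} (hx : 1/2 ≤ x) : |Real.log x| ≤ 2 * |x - 1| := by
  have hx0 : (0:ℝ) < x := by linarith
  rcases le_or_gt 1 x with h | h
  · rw [abs_of_nonneg (Real.log_nonneg h), abs_of_nonneg (by linarith)]
    have := Real.log_le_sub_one_of_pos hx0
    linarith
  · rw [abs_of_nonpos (Real.log_nonpos hx0.le h.le), abs_of_neg (by linarith)]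
    have h1 : Real.log x⁻¹ ≤ x⁻¹ - 1 := Real.log_le_sub_one_of_pos (by positivity)
    rw [Real.log_inv] at h1
    have h2 : x * x⁻¹ = 1 := mul_inv_cancel₀ hx0.ne'
    nlinarith [h1, h2]

private lemma aux_log_abs_bound {z : ℂ} (hz : ‖z‖ ≤ 1/2) :
    |Real.log (‖1 + z‖)| ≤ 2 * ‖z‖ := by
  have h1 : ‖(1:ℂ)‖ ≤ ‖1 + z‖ + ‖-z‖ := by
    calc ‖(1:ℂ)‖ = ‖(1 + z) + (-z)‖ := by ring_nf
    _ ≤ _ := norm_add_le _ _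
  simp only [norm_one, norm_neg] at h1
  have hge : 1/2 ≤ ‖1 + z‖ := by linarith
  have h2 : |‖1 + z‖ - 1| ≤ ‖z‖ := by
    have := abs_norm_sub_norm_le (1 + z) (1 : ℂ)
    simpa using this
  calc |Real.log (‖1 + z‖)| ≤ 2 * |‖1 + z‖ - 1| :=
        aux_log_bound hge
    _ ≤ 2 * ‖z‖ := by linarith

private noncomputable def auxF (J : ℕ) (b : Fin (J + 2) → ℂ) (ξ : Fin (J + 2) → ℝ)
    (m n : Fin (J + 2) → ℕ) (s : ℝ) (v u : Fin (J + 2) → ℝ) : ℝ :=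
  Real.log (‖1 + ∑ j ∈ Finset.univ.erase (0 : Fin (J + 2)),
              (b j / b 0) * Complex.exp ((((u j - u 0 : ℝ) : ℂ)
                + ((v j - v 0 : ℝ) : ℂ) * Complex.I) * (s : ℂ))‖)
            * Real.exp (-(∑ j, ((u j) ^ 2 + (v j) ^ 2) / ξ j))
            * (∏ j, u j ^ m j) * (∏ j, v j ^ n j)

/-- Let `J ≥ 2` (here the number of summands is `J + 2` with `J : ℕ`
arbitrary, and the distinguished index "1" is `0 : Fin (J + 2)`), let the `b_j` be
nonzero, `ξ_j > 0`, and `m, n ∈ ℕ^J`. Then there is `C > 0` such that for all `s > 0`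
and `A > 0` with `∑_{j≠1} |b_j/b_1| e^{−A} ≤ 1/2`,
`| ∫_{ℝ^J} ∫_{R_{1,∅}(A,s)} log|1 + ∑_{j≠1} (b_j/b_1) e^{(u_j − u_1 + i(v_j − v_1)) s}|
   · e^{−∑ (u_j² + v_j²)/ξ_j} u^m v^n du dv | ≤ C e^{−A}`,
where `R_{1,∅}(A,s) := {u : u_j − u_1 ≤ −A/s for all j ≠ 1}`. -/
theorem stmt_11 (J : ℕ) (b : Fin (J + 2) → ℂ) (hb : ∀ j, b j ≠ 0)
    (ξ : Fin (J + 2) → ℝ) (hξ : ∀ j, 0 < ξ j) (m n : Fin (J + 2) → ℕ) :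
    ∃ C : ℝ, 0 < C ∧ ∀ s : ℝ, 0 < s → ∀ A : ℝ, 0 < A →
      (∑ j ∈ Finset.univ.erase (0 : Fin (J + 2)), ‖b j / b 0‖)
          * Real.exp (-A) ≤ 1 / 2 →
      |∫ v : Fin (J + 2) → ℝ,
        ∫ u in {u : Fin (J + 2) → ℝ | ∀ j, j ≠ 0 → u j - u 0 ≤ -A / s},
          Real.log (‖1 + ∑ j ∈ Finset.univ.erase (0 : Fin (J + 2)),
              (b j / b 0) * Complex.exp ((((u j - u 0 : ℝ) : ℂ)
                + ((v j - v 0 : ℝ) : ℂ) * Complex.I) * (s : ℂ))‖)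
            * Real.exp (-(∑ j, ((u j) ^ 2 + (v j) ^ 2) / ξ j))
            * (∏ j, u j ^ m j) * (∏ j, v j ^ n j)|
      ≤ C * Real.exp (-A) := by
  classical
  set B : ℝ := ∑ j ∈ Finset.univ.erase (0 : Fin (J + 2)), ‖b j / b 0‖ with hB
  have hB0 : 0 ≤ B := Finset.sum_nonneg fun j _ => (norm_nonneg _)
  have h1d : ∀ (j : Fin (J + 2)) (p : ℕ),
      Integrable (fun t : ℝ => |t| ^ p * Real.exp (-(t ^ 2 / ξ j))) := by
    intro j p
    have hbpos : 0 < (ξ j)⁻¹ := inv_pos.2 (hξ j)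
    have hsx : (-1 : ℝ) < (p : ℝ) := lt_of_lt_of_le (by norm_num) (Nat.cast_nonneg p)
    have := (integrable_rpow_mul_exp_neg_mul_sq hbpos hsx).abs
    refine this.congr (Filter.Eventually.of_forall fun t => ?_)
    show |t ^ ((p : ℕ) : ℝ) * Real.exp (-(ξ j)⁻¹ * t ^ 2)| = |t| ^ p * Real.exp (-(t ^ 2 / ξ j))
    rw [Real.rpow_natCast, abs_mul, abs_pow, abs_of_pos (Real.exp_pos _)]
    congr 2
    field_simp
  have hprod : ∀ p : Fin (J + 2) → ℕ,
      Integrable (fun x : Fin (J + 2) → ℝ =>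
        ∏ j, (|x j| ^ p j * Real.exp (-(x j ^ 2 / ξ j)))) := by
    intro p
    exact Integrable.fintype_prod (f := fun j t => |t| ^ p j * Real.exp (-(t ^ 2 / ξ j)))
      (fun j => h1d j (p j))
  set gu : (Fin (J + 2) → ℝ) → ℝ :=
    fun x => ∏ j, (|x j| ^ m j * Real.exp (-(x j ^ 2 / ξ j))) with hgu_def
  set gv : (Fin (J + 2) → ℝ) → ℝ :=
    fun x => ∏ j, (|x j| ^ n j * Real.exp (-(x j ^ 2 / ξ j))) with hgv_def
  have hgu_int : Integrable gu := hprod m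
  have hgv_int : Integrable gv := hprod n
  have hgu_nn : ∀ x, 0 ≤ gu x := fun x => Finset.prod_nonneg fun j _ => by positivity
  have hgv_nn : ∀ x, 0 ≤ gv x := fun x => Finset.prod_nonneg fun j _ => by positivity
  set Iu : ℝ := ∫ x, gu x with hIu
  set Iv : ℝ := ∫ x, gv x with hIv
  have hIu0 : 0 ≤ Iu := integral_nonneg hgu_nn
  have hIv0 : 0 ≤ Iv := integral_nonneg hgv_nn
  refine ⟨2 * B * Iu * Iv + 1, by positivity, ?_⟩
  intro s hs A hA hsmall
  set S : Set (Fin (J + 2) → ℝ) :=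
    {u : Fin (J + 2) → ℝ | ∀ j, j ≠ 0 → u j - u 0 ≤ -A / s} with hSdef
  have hSmeas : MeasurableSet S := by
    have hSe : S = ⋂ j, ⋂ (_ : j ≠ (0 : Fin (J + 2))),
        {u : Fin (J + 2) → ℝ | u j - u 0 ≤ -A / s} := by
      ext u; simp [hSdef, Set.mem_iInter]
    rw [hSe]
    refine MeasurableSet.iInter fun j => MeasurableSet.iInter fun _ => ?_
    exact measurableSet_le ((measurable_pi_apply j).sub (measurable_pi_apply 0))
      measurable_const
  have hE : ∀ u v : Fin (J + 2) → ℝ,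
      Real.exp (-(∑ j, ((u j) ^ 2 + (v j) ^ 2) / ξ j))
        = (∏ j, Real.exp (-(u j ^ 2 / ξ j))) * ∏ j, Real.exp (-(v j ^ 2 / ξ j)) := by
    intro u v
    rw [← Real.exp_sum, ← Real.exp_sum, ← Real.exp_add]
    congr 1
    rw [← Finset.sum_add_distrib, ← Finset.sum_neg_distrib]
    refine Finset.sum_congr rfl fun j _ => ?_
    rw [add_div]
    ring
  have key : ∀ v : Fin (J + 2) → ℝ, ∀ u ∈ S,
      |auxF J b ξ m n s v u| ≤ (2 * B * Real.exp (-A) * gv v) * gu u := by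
    intro v u hu
    show |Real.log (‖1 + ∑ j ∈ Finset.univ.erase (0 : Fin (J + 2)),
              (b j / b 0) * Complex.exp ((((u j - u 0 : ℝ) : ℂ)
                + ((v j - v 0 : ℝ) : ℂ) * Complex.I) * (s : ℂ))‖)
            * Real.exp (-(∑ j, ((u j) ^ 2 + (v j) ^ 2) / ξ j))
            * (∏ j, u j ^ m j) * (∏ j, v j ^ n j)| ≤ (2 * B * Real.exp (-A) * gv v) * gu u
    set z : ℂ := ∑ j ∈ Finset.univ.erase (0 : Fin (J + 2)),
        (b j / b 0) * Complex.exp ((((u j - u 0 : ℝ) : ℂ)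
          + ((v j - v 0 : ℝ) : ℂ) * Complex.I) * (s : ℂ)) with hz
    have hzb : ‖z‖ ≤ B * Real.exp (-A) := by
      calc ‖z‖ ≤ ∑ j ∈ Finset.univ.erase (0 : Fin (J + 2)),
            ‖(b j / b 0) * Complex.exp ((((u j - u 0 : ℝ) : ℂ)
              + ((v j - v 0 : ℝ) : ℂ) * Complex.I) * (s : ℂ))‖ :=
            norm_sum_le _ _
        _ ≤ ∑ j ∈ Finset.univ.erase (0 : Fin (J + 2)),
            ‖b j / b 0‖ * Real.exp (-A) := by
            refine Finset.sum_le_sum fun j hj => ?_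
            have hj0 : j ≠ 0 := Finset.ne_of_mem_erase hj
            rw [norm_mul, Complex.norm_exp]
            refine mul_le_mul_of_nonneg_left ?_ (norm_nonneg _)
            have hre : ((((u j - u 0 : ℝ) : ℂ)
                + ((v j - v 0 : ℝ) : ℂ) * Complex.I) * (s : ℂ)).re
                = (u j - u 0) * s := by
              simp [Complex.mul_re]
            rw [hre]
            apply Real.exp_le_exp.2
            have h1 : u j - u 0 ≤ -A / s := hu j hj0
            have h2 := mul_le_mul_of_nonneg_right h1 hs.le
            rwa [div_mul_cancel₀ _ hs.ne'] at h2
        _ = B * Real.exp (-A) := by rw [← Finset.sum_mul]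
    have hz2 : ‖z‖ ≤ 1/2 := le_trans hzb hsmall
    have hlog : |Real.log (‖1 + z‖)| ≤ 2 * (B * Real.exp (-A)) := by
      calc |Real.log (‖1 + z‖)| ≤ 2 * ‖z‖ := aux_log_abs_bound hz2
        _ ≤ 2 * (B * Real.exp (-A)) := by linarith
    rw [abs_mul, abs_mul, abs_mul, abs_of_pos (Real.exp_pos _)]
    have hprm : |∏ j, u j ^ m j| = ∏ j, |u j| ^ m j := by
      rw [Finset.abs_prod]; exact Finset.prod_congr rfl fun j _ => abs_pow _ _
    have hprn : |∏ j, v j ^ n j| = ∏ j, |v j| ^ n j := by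
      rw [Finset.abs_prod]; exact Finset.prod_congr rfl fun j _ => abs_pow _ _
    rw [hprm, hprn, hE u v]
    have hrest : gu u * gv v = ((∏ j, Real.exp (-(u j ^ 2 / ξ j)))
        * (∏ j, Real.exp (-(v j ^ 2 / ξ j))))
        * (∏ j, |u j| ^ m j) * (∏ j, |v j| ^ n j) := by
      rw [hgu_def, hgv_def]
      simp only [Finset.prod_mul_distrib]
      ring
    have hnn : (0:ℝ) ≤ ((∏ j, Real.exp (-(u j ^ 2 / ξ j)))
        * ∏ j, Real.exp (-(v j ^ 2 / ξ j)))
        * (∏ j, |u j| ^ m j) * (∏ j, |v j| ^ n j) := by positivity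
    have h3 := mul_le_mul_of_nonneg_right hlog hnn
    calc |Real.log (‖1 + z‖)|
          * ((∏ j, Real.exp (-(u j ^ 2 / ξ j))) * ∏ j, Real.exp (-(v j ^ 2 / ξ j)))
          * (∏ j, |u j| ^ m j) * (∏ j, |v j| ^ n j)
        = |Real.log (‖1 + z‖)|
          * (((∏ j, Real.exp (-(u j ^ 2 / ξ j))) * ∏ j, Real.exp (-(v j ^ 2 / ξ j)))
          * (∏ j, |u j| ^ m j) * (∏ j, |v j| ^ n j)) := by ring
      _ ≤ (2 * (B * Real.exp (-A)))
          * (((∏ j, Real.exp (-(u j ^ 2 / ξ j))) * ∏ j, Real.exp (-(v j ^ 2 / ξ j)))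
          * (∏ j, |u j| ^ m j) * (∏ j, |v j| ^ n j)) := h3
      _ = (2 * B * Real.exp (-A) * gv v) * gu u := by
          linear_combination (-(2 * (B * Real.exp (-A)))) * hrest
  have inner_bound : ∀ v : Fin (J + 2) → ℝ,
      |∫ u in S, auxF J b ξ m n s v u| ≤ (2 * B * Real.exp (-A) * gv v) * Iu := by
    intro v
    have hc0 : 0 ≤ 2 * B * Real.exp (-A) * gv v := by positivity
    calc |∫ u in S, auxF J b ξ m n s v u|
        ≤ ∫ u in S, |auxF J b ξ m n s v u| := by
          simpa [Real.norm_eq_abs] using norm_integral_le_integral_norm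
            (μ := volume.restrict S) (fun u => auxF J b ξ m n s v u)
      _ ≤ ∫ u in S, (2 * B * Real.exp (-A) * gv v) * gu u := by
          refine integral_mono_of_nonneg (Filter.Eventually.of_forall fun u => abs_nonneg _)
            ((hgu_int.const_mul (2 * B * Real.exp (-A) * gv v)).integrableOn) ?_
          exact ae_restrict_of_forall_mem hSmeas fun u hu => key v u hu
      _ ≤ ∫ u, (2 * B * Real.exp (-A) * gv v) * gu u := by
          exact setIntegral_le_integral
            (hgu_int.const_mul (2 * B * Real.exp (-A) * gv v))
            (Filter.Eventually.of_forall fun u => mul_nonneg hc0 (hgu_nn u))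
      _ = (2 * B * Real.exp (-A) * gv v) * Iu := by rw [integral_const_mul]
  show |∫ v : Fin (J + 2) → ℝ, ∫ u in S, auxF J b ξ m n s v u|
      ≤ (2 * B * Iu * Iv + 1) * Real.exp (-A)
  calc |∫ v : Fin (J + 2) → ℝ, ∫ u in S, auxF J b ξ m n s v u|
      ≤ ∫ v : Fin (J + 2) → ℝ, |∫ u in S, auxF J b ξ m n s v u| := by
        simpa [Real.norm_eq_abs] using norm_integral_le_integral_norm (μ := volume)
          (fun v : Fin (J + 2) → ℝ => ∫ u in S, auxF J b ξ m n s v u)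
    _ ≤ ∫ v : Fin (J + 2) → ℝ, (2 * B * Real.exp (-A) * Iu) * gv v := by
        refine integral_mono_of_nonneg (Filter.Eventually.of_forall fun v => abs_nonneg _)
          (hgv_int.const_mul _) (Filter.Eventually.of_forall fun v => ?_)
        calc |∫ u in S, auxF J b ξ m n s v u|
            ≤ (2 * B * Real.exp (-A) * gv v) * Iu := inner_bound v
          _ = (2 * B * Real.exp (-A) * Iu) * gv v := by ring
    _ = (2 * B * Real.exp (-A) * Iu) * Iv := by rw [integral_const_mul]
    _ ≤ (2 * B * Iu * Iv + 1) * Real.exp (-A) := by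
        have h1 : (2 * B * Real.exp (-A) * Iu) * Iv
            = (2 * B * Iu * Iv) * Real.exp (-A) := by ring
        rw [h1]
        have h2 := Real.exp_pos (-A)
        nlinarith
end
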